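/- Let O be a complete discrete valuation ring with uniformizer π and residue field k, and C^• a complex of flat, separated, π-adically complete O-modules. Suppose H^i(C̄^•) has finite dimension d over k and that multiplication by π is injective on H^i(C^•) and on H^{i+1}(C^•). Then H^i(C^•) is a free O-module of rank d. Moreover, if ξ_1,…,ξ_d ∈ C^i satisfy ∂(ξ_j)=0 and the classes [ξ̄_1],…,[ξ̄_d] form a basis of H^i(C̄^•), then [ξ_1],…,[ξ_d] form an O-basis of H^i(C^•). -/

import Mathlib

section Aux

variable {O : Type} [CommRing O] {M : Type} [AddCommGroup M] [Module O M]

private lemma aux_mem (π : O) (n : ℕ) (x : M) :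
    x ∈ (Ideal.span {π}) ^ n • (⊤ : Submodule O M) ↔ ∃ y, x = π ^ n • y := by
  rw [Ideal.span_singleton_pow, Submodule.ideal_span_singleton_smul]
  constructor
  · intro h
    rw [← SetLike.mem_coe, Submodule.coe_pointwise_smul] at h
    obtain ⟨y, -, hy⟩ := h
    exact ⟨y, hy.symm⟩
  · rintro ⟨y, rfl⟩
    exact Submodule.smul_mem_pointwise_smul y _ _ Submodule.mem_top

private lemma aux_sep (π : O) [IsAdicComplete (Ideal.span {π}) M] (x : M)
    (hx : ∀ n : ℕ, ∃ y, x = π ^ n • y) : x = 0 := by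
  refine IsHausdorff.haus (inferInstance : IsHausdorff (Ideal.span {π}) M) x fun n => ?_
  rw [SModEq.zero]
  exact (aux_mem π n x).mpr (hx n)

private lemma aux_lim (π : O) [IsAdicComplete (Ideal.span {π}) M] (f : ℕ → M) :
    ∃ L : M, ∀ n : ℕ, ∃ y, L - (∑ k ∈ Finset.range n, π ^ k • f k) = π ^ n • y := by
  have hcompat : ∀ {m n : ℕ}, m ≤ n →
      (∑ k ∈ Finset.range m, π ^ k • f k) ≡ (∑ k ∈ Finset.range n, π ^ k • f k)
        [SMOD (Ideal.span {π} : Ideal O) ^ m • (⊤ : Submodule O M)] := by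
    intro m n hmn
    rw [SModEq.sub_mem, ← Finset.sum_range_add_sum_Ico _ hmn, sub_add_cancel_left,
      aux_mem]
    refine ⟨-(∑ k ∈ Finset.Ico m n, π ^ (k - m) • f k), ?_⟩
    rw [smul_neg, neg_inj, Finset.smul_sum]
    refine Finset.sum_congr rfl fun k hk => ?_
    rw [smul_smul, ← pow_add]
    congr 2
    rw [Finset.mem_Ico] at hk
    omega
  obtain ⟨L, hL⟩ := IsPrecomplete.prec (inferInstance : IsPrecomplete (Ideal.span {π}) M)
    (f := fun n => ∑ k ∈ Finset.range n, π ^ k • f k) hcompat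
  refine ⟨L, fun n => ?_⟩
  exact (aux_mem π n _).mp (SModEq.sub_mem.mp (hL n).symm)

end Aux

/-- Let `O` be a complete discrete valuation ring with uniformizer `π` and residue field
`k = O/π`, and `(C^•, d)` a complex of flat, separated, π-adically complete `O`-modules.
Suppose `H^{i+1}(C̄^•)` has finite dimension `dd` over `k`, with basis the classes of the
reductions of cocycles `ξ_1, …, ξ_dd ∈ C^{i+1}` (spanning and mod-π independence below),
and that multiplication by `π` is injective on `H^{i+1}(C^•)` and on `H^{i+2}(C^•)`.
Then `H^{i+1}(C^•)` is a free `O`-module of rank `dd`, and the classes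
`[ξ_1], …, [ξ_dd]` form an `O`-basis of `H^{i+1}(C^•)`. -/
theorem stmt5
    (O : Type) [CommRing O] [IsDomain O] [IsDiscreteValuationRing O]
    (π : O) (hπ : Irreducible π)
    [IsAdicComplete (Ideal.span {π}) O]
    (C : ℤ → Type) [∀ i, AddCommGroup (C i)] [∀ i, Module O (C i)]
    (d : ∀ i, C i →ₗ[O] C (i + 1))
    (hdd : ∀ i (x : C i), d (i + 1) (d i x) = 0)
    (hflat : ∀ i (x : C i), π • x = 0 → x = 0)
    [∀ i, IsAdicComplete (Ideal.span {π}) (C i)]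
    (i : ℤ) (dd : ℕ) (ξ : Fin dd → C (i + 1))
    (hξ : ∀ j, d (i + 1) (ξ j) = 0)
    -- the reductions `[ξ̄_j]` span `H^{i+1}(C̄^•)`:
    (hspan : ∀ ω : C (i + 1), (∃ z, d (i + 1) ω = π • z) →
      ∃ (c : Fin dd → O) (η : C i) (ζ : C (i + 1)),
        ω = ∑ j, c j • ξ j + d i η + π • ζ)
    -- the reductions `[ξ̄_j]` are linearly independent over `k` in `H^{i+1}(C̄^•)`:
    (hindep : ∀ c : Fin dd → O,
      (∃ (η : C i) (ζ : C (i + 1)), ∑ j, c j • ξ j = d i η + π • ζ) →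
        ∀ j, π ∣ c j)
    -- multiplication by `π` is injective on `H^{i+1}(C^•)`:
    (hinj₁ : ∀ ω : C (i + 1), d (i + 1) ω = 0 → (∃ η : C i, π • ω = d i η) →
      ∃ η : C i, ω = d i η)
    -- multiplication by `π` is injective on `H^{i+2}(C^•)`:
    (hinj₂ : ∀ ω : C (i + 1 + 1), d (i + 1 + 1) ω = 0 →
      (∃ η : C (i + 1), π • ω = d (i + 1) η) → ∃ η : C (i + 1), ω = d (i + 1) η) :
    ∃ b : Module.Basis (Fin dd) O
      (↥(LinearMap.ker (d (i + 1))) ⧸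
        (Submodule.comap (LinearMap.ker (d (i + 1))).subtype (LinearMap.range (d i)))),
      ∀ j, b j = Submodule.Quotient.mk ⟨ξ j, LinearMap.mem_ker.mpr (hξ j)⟩ := by
  classical
  -- Step function: decompose any cocycle
  have step : ∀ ζ : C (i+1), d (i+1) ζ = 0 →
      ∃ (c : Fin dd → O) (η : C i) (ζ' : C (i+1)),
        d (i+1) ζ' = 0 ∧ ζ = ∑ j, c j • ξ j + d i η + π • ζ' := by
    intro ζ hζ
    obtain ⟨c, η, ζ', hdec⟩ := hspan ζ ⟨0, by rw [hζ, smul_zero]⟩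
    refine ⟨c, η, ζ', ?_, hdec⟩
    apply hflat
    have h2 := congrArg (d (i+1)) hdec
    rw [hζ, map_add, map_add, map_sum] at h2
    simp only [map_smul, hξ, smul_zero, Finset.sum_const_zero, hdd, zero_add] at h2
    exact h2.symm
  -- Main spanning claim over O
  have main : ∀ ω : C (i+1), d (i+1) ω = 0 →
      ∃ (c : Fin dd → O) (η : C i), ω = ∑ j, c j • ξ j + d i η := by
    intro ω hω
    set T := {z : C (i+1) // d (i+1) z = 0} with hT
    set F : T → (Fin dd → O) × C i × T := fun z =>
      ⟨(step z.1 z.2).choose, (step z.1 z.2).choose_spec.choose,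
        ⟨(step z.1 z.2).choose_spec.choose_spec.choose,
         (step z.1 z.2).choose_spec.choose_spec.choose_spec.1⟩⟩ with hF
    set ζ : ℕ → T := fun n => Nat.rec ⟨ω, hω⟩ (fun _ z => (F z).2.2) n with hζseq
    set c : ℕ → Fin dd → O := fun n => (F (ζ n)).1 with hc
    set η : ℕ → C i := fun n => (F (ζ n)).2.1 with hη
    have hrec : ∀ n, (ζ n).1 = ∑ j, c n j • ξ j + d i (η n) + π • (ζ (n+1)).1 := by
      intro n
      have h : ζ (n+1) = (F (ζ n)).2.2 := rfl
      rw [h]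
      exact (step (ζ n).1 (ζ n).2).choose_spec.choose_spec.choose_spec.2
    have hpart : ∀ N : ℕ, ω = ∑ j, (∑ k ∈ Finset.range N, π ^ k * c k j) • ξ j
        + d i (∑ k ∈ Finset.range N, π ^ k • η k) + π ^ N • (ζ N).1 := by
      intro N
      induction N with
      | zero => simp; rfl
      | succ N ih =>
        rw [ih, hrec N]
        simp only [Finset.sum_range_succ, smul_add, map_add, map_smul, add_smul,
          Finset.sum_add_distrib, Finset.smul_sum, smul_smul, ← pow_succ]
        abel
    obtain ⟨cL, hcL⟩ : ∃ cL : Fin dd → O, ∀ j, ∀ n : ℕ,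
        ∃ y, cL j - (∑ k ∈ Finset.range n, π ^ k • c k j) = π ^ n • y := by
      have h := fun j => aux_lim π (fun n => c n j)
      choose cL h using h
      exact ⟨cL, h⟩
    obtain ⟨eL, heL⟩ := aux_lim π η
    refine ⟨cL, eL, ?_⟩
    have key : ω - (∑ j, cL j • ξ j + d i eL) = 0 := by
      apply aux_sep π
      intro n
      obtain ⟨y, hy⟩ := heL n
      have hcj : ∀ j, ∃ z, cL j - (∑ k ∈ Finset.range n, π ^ k * c k j) = π ^ n * z := by
        intro j
        obtain ⟨z, hz⟩ := hcL j n
        exact ⟨z, by simpa [smul_eq_mul] using hz⟩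
      choose z hz using hcj
      refine ⟨-(∑ j, z j • ξ j) - d i y + (ζ n).1, ?_⟩
      have e1 : ∀ j, cL j • ξ j = (∑ k ∈ Finset.range n, π ^ k * c k j) • ξ j
          + π ^ n • (z j • ξ j) := by
        intro j
        rw [smul_smul, ← add_smul]
        congr 1
        have h3 := hz j
        rw [sub_eq_iff_eq_add] at h3
        rw [h3]
        ring
      have e2 : eL = (∑ k ∈ Finset.range n, π ^ k • η k) + π ^ n • y := by
        rw [← hy]; abel
      calc ω - (∑ j, cL j • ξ j + d i eL)
          = ω - (∑ j, ((∑ k ∈ Finset.range n, π ^ k * c k j) • ξ j + π ^ n • (z j • ξ j))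
              + d i ((∑ k ∈ Finset.range n, π ^ k • η k) + π ^ n • y)) := by
            rw [← e2]
            congr 2
            exact Finset.sum_congr rfl fun j _ => e1 j
        _ = (ω - (∑ j, (∑ k ∈ Finset.range n, π ^ k * c k j) • ξ j
              + d i (∑ k ∈ Finset.range n, π ^ k • η k)))
              - π ^ n • (∑ j, z j • ξ j) - π ^ n • d i y := by
            rw [Finset.sum_add_distrib, map_add, map_smul, Finset.smul_sum]
            abel
        _ = π ^ n • (ζ n).1 - π ^ n • (∑ j, z j • ξ j) - π ^ n • d i y := by
            rw [hpart n]; abel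
        _ = π ^ n • (-(∑ j, z j • ξ j) - d i y + (ζ n).1) := by
            rw [smul_add, smul_sub, smul_neg]; abel
    exact sub_eq_zero.mp key
  -- Independence over O
  have indep : ∀ c : Fin dd → O, (∃ η, ∑ j, c j • ξ j = d i η) → ∀ j, c j = 0 := by
    have key : ∀ n : ℕ, ∀ c : Fin dd → O, (∃ η, ∑ j, c j • ξ j = d i η) →
        ∀ j, π ^ n ∣ c j := by
      intro n
      induction n with
      | zero => intro c _ j; simpa using ⟨c j, rfl⟩
      | succ n ih =>
        rintro c ⟨η, hη⟩ j
        have hd : ∀ j, π ∣ c j := hindep c ⟨η, 0, by rw [hη, smul_zero, add_zero]⟩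
        choose c' hc' using hd
        have h1 : π • (∑ j, c' j • ξ j) = d i η := by
          rw [Finset.smul_sum]
          simp only [smul_smul, smul_eq_mul]
          rw [← hη]
          exact Finset.sum_congr rfl fun j _ => by rw [← hc' j]
        have hker : d (i+1) (∑ j, c' j • ξ j) = 0 := by
          rw [map_sum]
          simp [map_smul, hξ]
        obtain ⟨η', hη'⟩ := hinj₁ _ hker ⟨η, h1⟩
        have h2 := ih c' ⟨η', hη'⟩ j
        rw [hc' j, pow_succ']
        exact mul_dvd_mul_left π h2
    intro c hc j
    apply aux_sep π (c j)
    intro n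
    obtain ⟨y, hy⟩ := key n c hc j
    exact ⟨y, by rw [hy, smul_eq_mul]⟩
  -- Put it together
  set K := LinearMap.ker (d (i+1)) with hKdef
  set R := Submodule.comap K.subtype (LinearMap.range (d i)) with hRdef
  set v : Fin dd → (↥K ⧸ R) := fun j =>
    Submodule.Quotient.mk ⟨ξ j, LinearMap.mem_ker.mpr (hξ j)⟩ with hv
  have hli : LinearIndependent O v := by
    rw [Fintype.linearIndependent_iff]
    intro g hg
    have hmem : (∑ j, g j • (⟨ξ j, LinearMap.mem_ker.mpr (hξ j)⟩ : ↥K)) ∈ R := by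
      rw [← Submodule.Quotient.mk_eq_zero, ← hg, ← Submodule.mkQ_apply, map_sum]
      simp only [map_smul, Submodule.mkQ_apply]
      rfl
    rw [hRdef, Submodule.mem_comap] at hmem
    obtain ⟨η, hη⟩ := hmem
    refine indep g ⟨η, ?_⟩
    rw [hη, Submodule.subtype_apply, AddSubmonoid.coe_finset_sum]
    simp
  have hsp : ⊤ ≤ Submodule.span O (Set.range v) := by
    rintro x -
    obtain ⟨⟨ω, hω⟩, rfl⟩ := Submodule.Quotient.mk_surjective R x
    obtain ⟨c, η, hdec⟩ := main ω (LinearMap.mem_ker.mp hω)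
    have hdη : d i η ∈ K := LinearMap.mem_ker.mpr (hdd i η)
    have hsum : (⟨ω, hω⟩ : ↥K) = (∑ j, c j • ⟨ξ j, LinearMap.mem_ker.mpr (hξ j)⟩)
        + ⟨d i η, hdη⟩ := by
      apply Subtype.ext
      rw [Submodule.coe_add, AddSubmonoid.coe_finset_sum]
      simpa using hdec
    have hrepr : Submodule.Quotient.mk (p := R) (⟨ω, hω⟩ : ↥K) = ∑ j, c j • v j := by
      rw [hsum, ← Submodule.mkQ_apply, map_add, map_sum]
      simp only [map_smul, Submodule.mkQ_apply]
      have hz : Submodule.Quotient.mk (p := R) (⟨d i η, hdη⟩ : ↥K) = 0 := by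
        rw [Submodule.Quotient.mk_eq_zero]
        exact ⟨η, rfl⟩
      rw [hz, add_zero]
    rw [hrepr]
    exact Submodule.sum_mem _ fun j _ => Submodule.smul_mem _ _
      (Submodule.subset_span ⟨j, rfl⟩)
  exact ⟨Module.Basis.mk hli hsp, fun j => Module.Basis.mk_apply hli hsp j⟩
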